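/- For every p > 1, the maximum of u_p satisfies ‖u_p‖_∞^{p-1} ≥ π²/4, where π²/4 is the first Dirichlet eigenvalue of -d²/dt² on (-1,1). -/

import Mathlib

open Real Set Filter Topology

noncomputable section

/-- `u` is the (unique) positive solution of the one-dimensional Lane–Emden problem
`-u'' = u^p` on `(-1,1)` with `u(-1) = u(1) = 0`; it is even, positive on `(-1,1)`,
decreasing on `[0,1]`, and its sup norm is attained at `0`. -/
def IsLaneEmden (p : ℝ) (u : ℝ → ℝ) : Prop :=
  ContDiff ℝ 2 u ∧
  (∀ t ∈ Ioo (-1 : ℝ) 1, deriv (deriv u) t = -(u t ^ p)) ∧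
  u (-1) = 0 ∧ u 1 = 0 ∧
  (∀ t ∈ Ioo (-1 : ℝ) 1, 0 < u t) ∧
  (∀ t : ℝ, u (-t) = u t) ∧
  (∀ ⦃s t : ℝ⦄, s ∈ Icc (0 : ℝ) 1 → t ∈ Icc (0 : ℝ) 1 → s ≤ t → u t ≤ u s) ∧
  (∀ t ∈ Icc (-1 : ℝ) 1, u t ≤ u 0)

/-- For every `p > 1`, `‖u_p‖_∞^(p-1) ≥ π²/4`, the first Dirichlet eigenvalue of
`-d²/dt²` on `(-1,1)`. -/
theorem sup_norm_pow_ge_first_eigenvalue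
    (u : ℝ → ℝ → ℝ) (hu : ∀ p : ℝ, 1 < p → IsLaneEmden p (u p)) :
    ∀ p : ℝ, 1 < p → π ^ 2 / 4 ≤ u p 0 ^ (p - 1) := by
  intro p hp
  obtain ⟨hcd, hode, hbm, hbp, hpos, heven, hmono, hmax⟩ := hu p hp
  set v := u p with hv
  by_contra hcon
  push_neg at hcon
  -- derivative facts
  have hdiff : Differentiable ℝ v := hcd.differentiable (by norm_num)
  have hcd1 : ContDiff ℝ 1 (deriv v) := by
    have h := (contDiff_succ_iff_deriv (n := 1)).mp (by exact_mod_cast hcd : ContDiff ℝ ((1:ℕ) + 1) v)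
    exact h.2.2
  have hdiff1 : Differentiable ℝ (deriv v) := hcd1.differentiable (by norm_num)
  set W : ℝ → ℝ := fun t => deriv v t * Real.cos (π/2 * t) + v t * (π/2 * Real.sin (π/2 * t)) with hW
  have hWd : ∀ t : ℝ, HasDerivAt W
      (deriv (deriv v) t * Real.cos (π/2*t) + deriv v t * (-Real.sin (π/2*t) * (π/2))
        + (deriv v t * (π/2 * Real.sin (π/2*t)) + v t * (π/2 * (Real.cos (π/2*t) * (π/2))))) t := by
    intro t
    have hid : HasDerivAt (fun x : ℝ => π/2 * x) (π/2) t := by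
      simpa using (hasDerivAt_id t).const_mul (π/2)
    have hc := hid.cos
    have hs := hid.sin.const_mul (π/2)
    exact (((hdiff1 t).hasDerivAt.mul hc)).add ((hdiff t).hasDerivAt.mul hs)
  have hWderiv : ∀ t ∈ Ioo (-1:ℝ) 1, 0 < deriv W t := by
    intro t ht
    have hWt := hWd t
    have hcospos : 0 < Real.cos (π/2 * t) := by
      apply Real.cos_pos_of_mem_Ioo
      constructor
      · nlinarith [pi_pos, ht.1]
      · nlinarith [pi_pos, ht.2]
    have hut : 0 < v t := hpos t ht
    have hlt : v t ^ (p-1) < π^2/4 := by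
      calc v t ^ (p-1) ≤ v 0 ^ (p-1) :=
            Real.rpow_le_rpow hut.le (hmax t ⟨ht.1.le, ht.2.le⟩) (by linarith)
        _ < π^2/4 := hcon
    have hrw : v t ^ p = v t ^ (p-1) * v t := by
      have h := Real.rpow_add hut (p-1) 1
      rw [Real.rpow_one, show p - 1 + 1 = p by ring] at h
      exact h
    rw [hWt.deriv, hode t ht, hrw]
    nlinarith [mul_pos (mul_pos hut hcospos) (sub_pos.mpr hlt)]
  have hcont : ContinuousOn W (Icc (-1:ℝ) 1) :=
    (fun t _ => ((hWd t).differentiableAt.continuousAt).continuousWithinAt)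
  have hsm : StrictMonoOn W (Icc (-1:ℝ) 1) := by
    apply strictMonoOn_of_deriv_pos (convex_Icc _ _) hcont
    intro t ht
    rw [interior_Icc] at ht
    exact hWderiv t ht
  have hW1 : W 1 = 0 := by
    simp [hW, hbp, mul_one, Real.cos_pi_div_two]
  have hWm1 : W (-1) = 0 := by
    have : π/2 * (-1) = -(π/2) := by ring
    simp [hW, hbm, this, Real.cos_pi_div_two]
  have := hsm (by norm_num : (-1:ℝ) ∈ Icc (-1:ℝ) 1) (by norm_num : (1:ℝ) ∈ Icc (-1:ℝ) 1) (by norm_num)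
  rw [hW1, hWm1] at this
  exact lt_irrefl 0 this
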